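/- 3-amalgamation for bilinear spaces: suppose D ⊆ A, B, C and A, B ⊆ V₁, A, C ⊆ V₂, B, C ⊆ V₃ are K-bilinear spaces with compatible inclusions, and A ⫝_D B (in V₁), B ⫝_D C (in V₃), C ⫝_D A (in V₂). Then there is a K-bilinear space W with bilinear monomorphisms from V₁, V₂, V₃ making the cube commute, and such that in W: A ⫝_D V₃, B ⫝_D V₂, and C ⫝_D V₁. If all of V₁, V₂, V₃ are symmetric (resp. alternating), W can be chosen symmetric (resp. alternating). -/

import Mathlib

universe u

section AmalgamationHelpers

variable {K : Type u} [Field K]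

/-- A retraction of an injective linear map over a field. -/
lemma bilamalg_exists_retraction {M N : Type u} [AddCommGroup M] [Module K M]
    [AddCommGroup N] [Module K N] (f : M →ₗ[K] N) (hf : Function.Injective f) :
    ∃ r : N →ₗ[K] M, ∀ m, r (f m) = m := by
  obtain ⟨g, hg⟩ := f.exists_leftInverse_of_injective (LinearMap.ker_eq_bot.mpr hf)
  exact ⟨g, fun m => LinearMap.congr_fun hg m⟩

/-- For an alternating bilinear form, `B x y + B y x = 0`. -/
lemma bilamalg_alt_pair {M : Type u} [AddCommGroup M] [Module K M]
    (Bf : M →ₗ[K] M →ₗ[K] K) (h : ∀ x, Bf x x = 0) : ∀ x y, Bf x y + Bf y x = 0 := by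
  intro x y
  have hxy := h (x + y)
  simp only [map_add, LinearMap.add_apply, h x, h y] at hxy
  linear_combination hxy

/-- Decomposition of the target of an injective linear map into image and a complement. -/
lemma bilamalg_pair_decomp {M N : Type u} [AddCommGroup M] [Module K M]
    [AddCommGroup N] [Module K N] (f : M →ₗ[K] N) (hf : Function.Injective f) :
    ∃ (ρ : N →ₗ[K] M) (C' : Submodule K N) (ρ' : N →ₗ[K] N),
      (∀ m, ρ (f m) = m) ∧ (∀ n, ρ' n ∈ C') ∧ (∀ n, f (ρ n) + ρ' n = n) ∧
      (LinearMap.range f ⊓ C' = ⊥) ∧ (∀ m, ρ' (f m) = 0) := by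
  obtain ⟨C', hC'⟩ := (LinearMap.range f).exists_isCompl
  obtain ⟨r, hr⟩ := bilamalg_exists_retraction f hf
  set π₁ : N →ₗ[K] N := (LinearMap.range f).subtype ∘ₗ
    Submodule.linearProjOfIsCompl _ _ hC'
  set π₂ : N →ₗ[K] N := C'.subtype ∘ₗ Submodule.linearProjOfIsCompl _ _ hC'.symm
  have hπ₁mem : ∀ n, π₁ n ∈ LinearMap.range f :=
    fun n => (Submodule.linearProjOfIsCompl _ _ hC' n).2
  have hπ₂mem : ∀ n, π₂ n ∈ C' := fun n => (Submodule.linearProjOfIsCompl _ _ hC'.symm n).2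
  have hsum : ∀ n, π₁ n + π₂ n = n := fun n =>
    Submodule.projection_add_projection_eq_self hC' n
  refine ⟨r ∘ₗ π₁, C', π₂, ?_, hπ₂mem, ?_, hC'.inf_eq_bot, ?_⟩
  · intro m
    have h1 : π₁ (f m) = f m := by
      exact congrArg (Submodule.subtype _)
        (Submodule.projectionOnto_apply_left hC' ⟨f m, LinearMap.mem_range_self f m⟩)
    simp [LinearMap.comp_apply, h1, hr]
  · intro n
    have : f (r (π₁ n)) = π₁ n := by
      obtain ⟨m, hm⟩ := hπ₁mem n
      rw [← hm, hr]
    simp only [LinearMap.comp_apply]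
    rw [this]; exact hsum n
  · intro m
    have : π₂ (f m) = 0 := by
      exact congrArg (Submodule.subtype _)
        (Submodule.projectionOnto_apply_of_mem_right hC'.symm
          (LinearMap.mem_range_self f m))
    exact this

/-- Triple decomposition: given two submodules intersecting trivially, projections. -/
lemma bilamalg_triple_decomp {V : Type u} [AddCommGroup V] [Module K V]
    (S T : Submodule K V) (hST : S ⊓ T = ⊥) :
    ∃ (π₁ π₂ π₃ : V →ₗ[K] V),
      (∀ x ∈ S, π₁ x = x) ∧ (∀ x ∈ T, π₁ x = 0) ∧ (∀ x, π₁ x ∈ S) ∧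
      (∀ x ∈ S, π₂ x = 0) ∧ (∀ x ∈ T, π₂ x = x) ∧ (∀ x, π₂ x ∈ T) ∧
      (∀ x ∈ S, π₃ x = 0) ∧ (∀ x ∈ T, π₃ x = 0) ∧
      (∀ x, π₁ x + π₂ x + π₃ x = x) := by
  obtain ⟨V', hV'⟩ := (S ⊔ T).exists_isCompl
  have h1 : IsCompl S (T ⊔ V') := by
    constructor
    · rw [disjoint_iff]
      have key : (T ⊔ V') ⊓ (S ⊔ T) = T := by
        rw [sup_inf_assoc_of_le V' (le_sup_right : T ≤ S ⊔ T),
          inf_comm V' (S ⊔ T), hV'.inf_eq_bot, sup_bot_eq]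
      calc S ⊓ (T ⊔ V') = S ⊓ ((T ⊔ V') ⊓ (S ⊔ T)) := by
            rw [inf_comm (T ⊔ V') (S ⊔ T), ← inf_assoc,
              inf_eq_left.mpr (le_sup_left : S ≤ S ⊔ T)]
        _ = S ⊓ T := by rw [key]
        _ = ⊥ := hST
    · rw [codisjoint_iff, ← sup_assoc, hV'.sup_eq_top]
  have h2 : IsCompl T (S ⊔ V') := by
    constructor
    · rw [disjoint_iff]
      have key : (S ⊔ V') ⊓ (S ⊔ T) = S := by
        rw [sup_inf_assoc_of_le V' (le_sup_left : S ≤ S ⊔ T),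
          inf_comm V' (S ⊔ T), hV'.inf_eq_bot, sup_bot_eq]
      calc T ⊓ (S ⊔ V') = T ⊓ ((S ⊔ V') ⊓ (S ⊔ T)) := by
            rw [inf_comm (S ⊔ V') (S ⊔ T), ← inf_assoc,
              inf_eq_left.mpr (le_sup_right : T ≤ S ⊔ T)]
        _ = T ⊓ S := by rw [key]
        _ = ⊥ := by rw [inf_comm]; exact hST
    · rw [codisjoint_iff, ← sup_assoc, sup_comm T S, hV'.sup_eq_top]
  set π₁ : V →ₗ[K] V := S.subtype ∘ₗ Submodule.linearProjOfIsCompl _ _ h1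
  set π₂ : V →ₗ[K] V := T.subtype ∘ₗ Submodule.linearProjOfIsCompl _ _ h2
  have hπ₁S : ∀ x ∈ S, π₁ x = x := fun x hx => by
    exact congrArg (Submodule.subtype S)
      (Submodule.projectionOnto_apply_left h1 ⟨x, hx⟩)
  have hπ₁T : ∀ x ∈ T, π₁ x = 0 := fun x hx => by
    exact congrArg (Submodule.subtype S)
      (Submodule.projectionOnto_apply_of_mem_right h1 (Submodule.mem_sup_left hx))
  have hπ₂S : ∀ x ∈ S, π₂ x = 0 := fun x hx => by
    exact congrArg (Submodule.subtype T)
      (Submodule.projectionOnto_apply_of_mem_right h2 (Submodule.mem_sup_left hx))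
  have hπ₂T : ∀ x ∈ T, π₂ x = x := fun x hx => by
    exact congrArg (Submodule.subtype T)
      (Submodule.projectionOnto_apply_left h2 ⟨x, hx⟩)
  refine ⟨π₁, π₂, LinearMap.id - π₁ - π₂, hπ₁S, hπ₁T,
    (fun x => (Submodule.linearProjOfIsCompl _ _ h1 x).2), hπ₂S, hπ₂T,
    (fun x => (Submodule.linearProjOfIsCompl _ _ h2 x).2), ?_, ?_, ?_⟩
  · intro x hx
    simp [LinearMap.sub_apply, hπ₁S x hx, hπ₂S x hx]
  · intro x hx
    simp [LinearMap.sub_apply, hπ₁T x hx, hπ₂T x hx]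
  · intro x
    simp only [LinearMap.sub_apply, LinearMap.id_apply]
    abel

/-- Projections for a space decomposed as image of `u` ⊕ image under `w` of `B'` ⊕ rest. -/
lemma bilamalg_split_decomp {A B V : Type u} [AddCommGroup A] [Module K A]
    [AddCommGroup B] [Module K B] [AddCommGroup V] [Module K V]
    (u : A →ₗ[K] V) (w : B →ₗ[K] V) (B' : Submodule K B)
    (hu : Function.Injective u) (hw : Function.Injective w)
    (hmeet : LinearMap.range u ⊓ Submodule.map w B' = ⊥) :
    ∃ (pa : V →ₗ[K] A) (pb : V →ₗ[K] B) (p' : V →ₗ[K] V),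
      (∀ a, pa (u a) = a) ∧ (∀ a, pb (u a) = 0) ∧ (∀ a, p' (u a) = 0) ∧
      (∀ b ∈ B', pa (w b) = 0) ∧ (∀ b ∈ B', pb (w b) = b) ∧ (∀ b ∈ B', p' (w b) = 0) ∧
      (∀ v, u (pa v) + w (pb v) + p' v = v) := by
  obtain ⟨π₁, π₂, π₃, hπ₁S, hπ₁T, hπ₁mem, hπ₂S, hπ₂T, hπ₂mem, hπ₃S, hπ₃T, hsum⟩ :=
    bilamalg_triple_decomp (LinearMap.range u) (Submodule.map w B') hmeet
  obtain ⟨ru, hru⟩ := bilamalg_exists_retraction u hu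
  obtain ⟨rw', hrw⟩ := bilamalg_exists_retraction w hw
  have hupa : ∀ v, u (ru (π₁ v)) = π₁ v := by
    intro v
    obtain ⟨a, ha⟩ := hπ₁mem v
    rw [← ha, hru]
  have hwpb : ∀ v, w (rw' (π₂ v)) = π₂ v := by
    intro v
    obtain ⟨b, _, hb⟩ := hπ₂mem v
    rw [← hb, hrw]
  refine ⟨ru ∘ₗ π₁, rw' ∘ₗ π₂, π₃, ?_, ?_, ?_, ?_, ?_, ?_, ?_⟩
  · intro a
    apply hu
    simp only [LinearMap.comp_apply]
    rw [hupa, hπ₁S _ (LinearMap.mem_range_self u a)]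
  · intro a
    apply hw
    simp only [LinearMap.comp_apply, map_zero]
    rw [hwpb, hπ₂S _ (LinearMap.mem_range_self u a)]
  · intro a; exact hπ₃S _ (LinearMap.mem_range_self u a)
  · intro b hb
    apply hu
    simp only [LinearMap.comp_apply, map_zero]
    rw [hupa, hπ₁T _ (Submodule.mem_map_of_mem hb)]
  · intro b hb
    apply hw
    simp only [LinearMap.comp_apply]
    rw [hwpb, hπ₂T _ (Submodule.mem_map_of_mem hb)]
  · intro b hb; exact hπ₃T _ (Submodule.mem_map_of_mem hb)
  · intro v
    simp only [LinearMap.comp_apply]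
    rw [hupa, hwpb]
    exact hsum v

end AmalgamationHelpers

set_option maxHeartbeats 1600000

/-- 3-amalgamation for bilinear spaces: given a commuting system of bilinear monomorphisms
from `D` into `A, B, C` and from those into `V₁ ⊇ A, B`, `V₂ ⊇ A, C`, `V₃ ⊇ B, C`, with
`A ⫝_D B` in `V₁`, `B ⫝_D C` in `V₃` and `C ⫝_D A` in `V₂`, there is a bilinear space `W`
with bilinear monomorphisms from `V₁, V₂, V₃` making the cube commute, such that in `W`
`A ⫝_D V₃`, `B ⫝_D V₂` and `C ⫝_D V₁`; moreover `W` can be chosen symmetric (resp.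
alternating) if `V₁, V₂, V₃` all are. -/
theorem bilinear_three_amalgamation {K : Type u} [Field K]
    (D A B C V₁ V₂ V₃ : Type u)
    [AddCommGroup D] [Module K D] [AddCommGroup A] [Module K A]
    [AddCommGroup B] [Module K B] [AddCommGroup C] [Module K C]
    [AddCommGroup V₁] [Module K V₁] [AddCommGroup V₂] [Module K V₂]
    [AddCommGroup V₃] [Module K V₃]
    (BD : D →ₗ[K] D →ₗ[K] K) (BA : A →ₗ[K] A →ₗ[K] K) (BB : B →ₗ[K] B →ₗ[K] K)
    (BC : C →ₗ[K] C →ₗ[K] K) (B₁ : V₁ →ₗ[K] V₁ →ₗ[K] K) (B₂ : V₂ →ₗ[K] V₂ →ₗ[K] K)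
    (B₃ : V₃ →ₗ[K] V₃ →ₗ[K] K)
    (dA : D →ₗ[K] A) (dB : D →ₗ[K] B) (dC : D →ₗ[K] C)
    (aV₁ : A →ₗ[K] V₁) (bV₁ : B →ₗ[K] V₁) (aV₂ : A →ₗ[K] V₂) (cV₂ : C →ₗ[K] V₂)
    (bV₃ : B →ₗ[K] V₃) (cV₃ : C →ₗ[K] V₃)
    (hdA : Function.Injective dA) (hdAb : ∀ x y : D, BA (dA x) (dA y) = BD x y)
    (hdB : Function.Injective dB) (hdBb : ∀ x y : D, BB (dB x) (dB y) = BD x y)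
    (hdC : Function.Injective dC) (hdCb : ∀ x y : D, BC (dC x) (dC y) = BD x y)
    (haV₁ : Function.Injective aV₁) (haV₁b : ∀ x y : A, B₁ (aV₁ x) (aV₁ y) = BA x y)
    (hbV₁ : Function.Injective bV₁) (hbV₁b : ∀ x y : B, B₁ (bV₁ x) (bV₁ y) = BB x y)
    (haV₂ : Function.Injective aV₂) (haV₂b : ∀ x y : A, B₂ (aV₂ x) (aV₂ y) = BA x y)
    (hcV₂ : Function.Injective cV₂) (hcV₂b : ∀ x y : C, B₂ (cV₂ x) (cV₂ y) = BC x y)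
    (hbV₃ : Function.Injective bV₃) (hbV₃b : ∀ x y : B, B₃ (bV₃ x) (bV₃ y) = BB x y)
    (hcV₃ : Function.Injective cV₃) (hcV₃b : ∀ x y : C, B₃ (cV₃ x) (cV₃ y) = BC x y)
    (hcomm₁ : aV₁ ∘ₗ dA = bV₁ ∘ₗ dB)
    (hcomm₂ : aV₂ ∘ₗ dA = cV₂ ∘ₗ dC)
    (hcomm₃ : bV₃ ∘ₗ dB = cV₃ ∘ₗ dC)
    (hAB : LinearMap.range aV₁ ⊓ LinearMap.range bV₁ = LinearMap.range (aV₁ ∘ₗ dA))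
    (hBC : LinearMap.range bV₃ ⊓ LinearMap.range cV₃ = LinearMap.range (bV₃ ∘ₗ dB))
    (hCA : LinearMap.range cV₂ ⊓ LinearMap.range aV₂ = LinearMap.range (cV₂ ∘ₗ dC)) :
    ∃ (W : Type u) (_ : AddCommGroup W) (_ : Module K W)
      (BW : W →ₗ[K] W →ₗ[K] K) (g₁ : V₁ →ₗ[K] W) (g₂ : V₂ →ₗ[K] W) (g₃ : V₃ →ₗ[K] W),
      Function.Injective g₁ ∧ (∀ x y : V₁, BW (g₁ x) (g₁ y) = B₁ x y) ∧
      Function.Injective g₂ ∧ (∀ x y : V₂, BW (g₂ x) (g₂ y) = B₂ x y) ∧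
      Function.Injective g₃ ∧ (∀ x y : V₃, BW (g₃ x) (g₃ y) = B₃ x y) ∧
      g₁ ∘ₗ aV₁ = g₂ ∘ₗ aV₂ ∧ g₁ ∘ₗ bV₁ = g₃ ∘ₗ bV₃ ∧ g₂ ∘ₗ cV₂ = g₃ ∘ₗ cV₃ ∧
      (LinearMap.range (g₁ ∘ₗ aV₁) ⊓ LinearMap.range g₃ =
        LinearMap.range (g₁ ∘ₗ aV₁ ∘ₗ dA)) ∧
      (LinearMap.range (g₃ ∘ₗ bV₃) ⊓ LinearMap.range g₂ =
        LinearMap.range (g₁ ∘ₗ aV₁ ∘ₗ dA)) ∧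
      (LinearMap.range (g₂ ∘ₗ cV₂) ⊓ LinearMap.range g₁ =
        LinearMap.range (g₁ ∘ₗ aV₁ ∘ₗ dA)) ∧
      ((∀ x y : V₁, B₁ x y = B₁ y x) → (∀ x y : V₂, B₂ x y = B₂ y x) →
        (∀ x y : V₃, B₃ x y = B₃ y x) → ∀ x y : W, BW x y = BW y x) ∧
      ((∀ x : V₁, B₁ x x = 0) → (∀ x : V₂, B₂ x x = 0) →
        (∀ x : V₃, B₃ x x = 0) → ∀ x : W, BW x x = 0) := by
    -- pointwise versions of the commutation hypotheses
  have hc₁ : ∀ d : D, aV₁ (dA d) = bV₁ (dB d) := fun d => LinearMap.congr_fun hcomm₁ d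
  have hc₂ : ∀ d : D, aV₂ (dA d) = cV₂ (dC d) := fun d => LinearMap.congr_fun hcomm₂ d
  have hc₃ : ∀ d : D, bV₃ (dB d) = cV₃ (dC d) := fun d => LinearMap.congr_fun hcomm₃ d
  obtain ⟨πD, hπD⟩ := bilamalg_exists_retraction dA hdA
  obtain ⟨ρB, B', ρB', hρB, hρB'mem, hρBsum, hB'meet, hρB'dB⟩ := bilamalg_pair_decomp dB hdB
  obtain ⟨ρC, C', ρC', hρC, hρC'mem, hρCsum, hC'meet, hρC'dC⟩ := bilamalg_pair_decomp dC hdC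
  -- the three "trivially intersecting" conditions
  have hmeet₁ : LinearMap.range aV₁ ⊓ Submodule.map bV₁ B' = ⊥ := by
    rw [eq_bot_iff]
    rintro x ⟨hx1, hx2⟩
    obtain ⟨b, hbB', rfl⟩ := hx2
    have hx : bV₁ b ∈ LinearMap.range aV₁ ⊓ LinearMap.range bV₁ :=
      ⟨hx1, LinearMap.mem_range_self bV₁ b⟩
    rw [hAB] at hx
    obtain ⟨d, hd⟩ := hx
    simp only [LinearMap.comp_apply] at hd
    have hd' : bV₁ (dB d) = bV₁ b := by rw [← hc₁ d]; exact hd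
    have hb : b = dB d := (hbV₁ hd').symm
    have hmm : dB d ∈ LinearMap.range dB ⊓ B' :=
      ⟨LinearMap.mem_range_self dB d, by rw [← hb]; exact hbB'⟩
    rw [hB'meet, Submodule.mem_bot] at hmm
    have hb0 : b = 0 := by rw [hb, hmm]
    simp [hb0]
  have hmeet₂ : LinearMap.range aV₂ ⊓ Submodule.map cV₂ C' = ⊥ := by
    rw [eq_bot_iff]
    rintro x ⟨hx1, hx2⟩
    obtain ⟨c, hcC', rfl⟩ := hx2
    have hx : cV₂ c ∈ LinearMap.range cV₂ ⊓ LinearMap.range aV₂ :=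
      ⟨LinearMap.mem_range_self cV₂ c, hx1⟩
    rw [hCA] at hx
    obtain ⟨d, hd⟩ := hx
    simp only [LinearMap.comp_apply] at hd
    have hcdc : c = dC d := (hcV₂ hd).symm
    have hmm : dC d ∈ LinearMap.range dC ⊓ C' :=
      ⟨LinearMap.mem_range_self dC d, by rw [← hcdc]; exact hcC'⟩
    rw [hC'meet, Submodule.mem_bot] at hmm
    have hc0 : c = 0 := by rw [hcdc, hmm]
    simp [hc0]
  have hmeet₃ : LinearMap.range bV₃ ⊓ Submodule.map cV₃ C' = ⊥ := by
    rw [eq_bot_iff]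
    rintro x ⟨hx1, hx2⟩
    obtain ⟨c, hcC', rfl⟩ := hx2
    have hx : cV₃ c ∈ LinearMap.range bV₃ ⊓ LinearMap.range cV₃ :=
      ⟨hx1, LinearMap.mem_range_self cV₃ c⟩
    rw [hBC] at hx
    obtain ⟨d, hd⟩ := hx
    simp only [LinearMap.comp_apply] at hd
    have hd' : cV₃ (dC d) = cV₃ c := by rw [← hc₃ d]; exact hd
    have hcdc : c = dC d := (hcV₃ hd').symm
    have hmm : dC d ∈ LinearMap.range dC ⊓ C' :=
      ⟨LinearMap.mem_range_self dC d, by rw [← hcdc]; exact hcC'⟩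
    rw [hC'meet, Submodule.mem_bot] at hmm
    have hc0 : c = 0 := by rw [hcdc, hmm]
    simp [hc0]
  obtain ⟨pa1, pb1, p1', hpa1u, hpb1u, hp1'u, hpa1w, hpb1w, hp1'w, hsum1⟩ :=
    bilamalg_split_decomp aV₁ bV₁ B' haV₁ hbV₁ hmeet₁
  obtain ⟨p2a, p2c, p2', hp2au, hp2cu, hp2'u, hp2aw, hp2cw, hp2'w, hsum2⟩ :=
    bilamalg_split_decomp aV₂ cV₂ C' haV₂ hcV₂ hmeet₂
  obtain ⟨p3b, p3c, p3', hp3bu, hp3cu, hp3'u, hp3bw, hp3cw, hp3'w, hsum3⟩ :=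
    bilamalg_split_decomp bV₃ cV₃ C' hbV₃ hcV₃ hmeet₃
  -- behaviour of the projections on general elements of `B` and `C`
  have hbsplit : ∀ b : B, bV₁ b = aV₁ (dA (ρB b)) + bV₁ (ρB' b) := by
    intro b
    conv_lhs => rw [← hρBsum b]
    rw [map_add, hc₁]
  have hpa1b : ∀ b : B, pa1 (bV₁ b) = dA (ρB b) := by
    intro b; rw [hbsplit b, map_add, hpa1u, hpa1w _ (hρB'mem b), add_zero]
  have hpb1b : ∀ b : B, pb1 (bV₁ b) = ρB' b := by
    intro b; rw [hbsplit b, map_add, hpb1u, hpb1w _ (hρB'mem b), zero_add]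
  set qB : V₁ →ₗ[K] B := dB ∘ₗ (πD ∘ₗ pa1) + pb1 with hqBdef
  have hqBb : ∀ b : B, qB (bV₁ b) = b := by
    intro b
    simp only [hqBdef, LinearMap.add_apply, LinearMap.comp_apply, hpa1b, hpb1b, hπD]
    exact hρBsum b
  have hcsplit₂ : ∀ c : C, cV₂ c = aV₂ (dA (ρC c)) + cV₂ (ρC' c) := by
    intro c
    conv_lhs => rw [← hρCsum c]
    rw [map_add, hc₂]
  have hp2ac : ∀ c : C, p2a (cV₂ c) = dA (ρC c) := by
    intro c; rw [hcsplit₂ c, map_add, hp2au, hp2aw _ (hρC'mem c), add_zero]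
  have hp2cc : ∀ c : C, p2c (cV₂ c) = ρC' c := by
    intro c; rw [hcsplit₂ c, map_add, hp2cu, hp2cw _ (hρC'mem c), zero_add]
  have hp2'c : ∀ c : C, p2' (cV₂ c) = 0 := by
    intro c; rw [hcsplit₂ c, map_add, hp2'u, hp2'w _ (hρC'mem c), add_zero]
  have hcsplit₃ : ∀ c : C, cV₃ c = bV₃ (dB (ρC c)) + cV₃ (ρC' c) := by
    intro c
    conv_lhs => rw [← hρCsum c]
    rw [map_add, hc₃]
  have hp3bc : ∀ c : C, p3b (cV₃ c) = dB (ρC c) := by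
    intro c; rw [hcsplit₃ c, map_add, hp3bu, hp3bw _ (hρC'mem c), add_zero]
  have hp3cc : ∀ c : C, p3c (cV₃ c) = ρC' c := by
    intro c; rw [hcsplit₃ c, map_add, hp3cu, hp3cw _ (hρC'mem c), zero_add]
  have hp3'c : ∀ c : C, p3' (cV₃ c) = 0 := by
    intro c; rw [hcsplit₃ c, map_add, hp3'u, hp3'w _ (hρC'mem c), add_zero]
  -- key cross-term identities
  have key23 : ∀ (b : B) (c : C),
      B₂ (aV₂ (dA (ρB b))) (cV₂ c) + B₃ (bV₃ (ρB' b)) (cV₃ c) = B₃ (bV₃ b) (cV₃ c) := by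
    intro b c
    rw [hc₂, hcV₂b, ← hcV₃b, ← hc₃, ← LinearMap.add_apply, ← map_add, ← map_add, hρBsum]
  have key23' : ∀ (c : C) (b : B),
      B₂ (cV₂ c) (aV₂ (dA (ρB b))) + B₃ (cV₃ c) (bV₃ (ρB' b)) = B₃ (cV₃ c) (bV₃ b) := by
    intro c b
    rw [hc₂, hcV₂b, ← hcV₃b, ← hc₃, ← map_add, ← map_add, hρBsum]
  have ecc : ∀ (c c' : C), B₂ (cV₂ c) (cV₂ c') = B₃ (cV₃ c) (cV₃ c') := by
    intro c c'; rw [hcV₂b, hcV₃b]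
  -- the maps into the amalgam
  set g₁ : V₁ →ₗ[K] V₁ × C × V₂ × V₃ :=
    LinearMap.prod LinearMap.id (LinearMap.prod 0 (LinearMap.prod 0 0)) with hg₁
  set g₂ : V₂ →ₗ[K] V₁ × C × V₂ × V₃ :=
    LinearMap.prod (aV₁ ∘ₗ p2a) (LinearMap.prod p2c (LinearMap.prod p2' 0)) with hg₂
  set g₃ : V₃ →ₗ[K] V₁ × C × V₂ × V₃ :=
    LinearMap.prod (bV₁ ∘ₗ p3b) (LinearMap.prod p3c (LinearMap.prod 0 p3')) with hg₃
  have hg₁a : ∀ v : V₁, g₁ v = (v, 0, 0, 0) := fun v => rfl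
  have hg₂a : ∀ v : V₂, g₂ v = (aV₁ (p2a v), p2c v, p2' v, 0) := fun v => rfl
  have hg₃a : ∀ v : V₃, g₃ v = (bV₁ (p3b v), p3c v, 0, p3' v) := fun v => rfl
  -- the bilinear form on the amalgam
  set BW : (V₁ × C × V₂ × V₃) →ₗ[K] (V₁ × C × V₂ × V₃) →ₗ[K] K :=
    LinearMap.mk₂ K (fun x y =>
      B₁ x.1 y.1
      + (B₂ (aV₂ (pa1 x.1)) (cV₂ y.2.1) + B₃ (bV₃ (pb1 x.1)) (cV₃ y.2.1))
      + B₂ (aV₂ (pa1 x.1)) y.2.2.1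
      + B₃ (bV₃ (qB x.1)) y.2.2.2
      + (B₂ (cV₂ x.2.1) (aV₂ (pa1 y.1)) + B₃ (cV₃ x.2.1) (bV₃ (pb1 y.1)))
      + B₂ (cV₂ x.2.1) (cV₂ y.2.1)
      + B₂ (cV₂ x.2.1) y.2.2.1
      + B₃ (cV₃ x.2.1) y.2.2.2
      + B₂ x.2.2.1 (aV₂ (pa1 y.1))
      + B₂ x.2.2.1 (cV₂ y.2.1)
      + B₂ x.2.2.1 y.2.2.1
      + B₃ x.2.2.2 (bV₃ (qB y.1))
      + B₃ x.2.2.2 (cV₃ y.2.1)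
      + B₃ x.2.2.2 y.2.2.2)
      (fun m₁ m₂ n => by
        simp only [Prod.fst_add, Prod.snd_add, map_add, LinearMap.add_apply]
        ring)
      (fun c m n => by
        simp only [Prod.smul_fst, Prod.smul_snd, map_smul, LinearMap.smul_apply,
          smul_eq_mul]
        ring)
      (fun m n₁ n₂ => by
        simp only [Prod.fst_add, Prod.snd_add, map_add, LinearMap.add_apply]
        ring)
      (fun c m n => by
        simp only [Prod.smul_fst, Prod.smul_snd, map_smul, LinearMap.smul_apply,
          smul_eq_mul]
        ring)
    with hBWdef
  refine ⟨V₁ × C × V₂ × V₃, inferInstance, inferInstance, BW, g₁, g₂, g₃,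
    ?_, ?_, ?_, ?_, ?_, ?_, ?_, ?_, ?_, ?_, ?_, ?_, ?_, ?_⟩
  · -- injectivity of g₁
    intro x y hxy
    have h := congrArg Prod.fst hxy
    simpa [hg₁a] using h
  · -- g₁ preserves the form
    intro x y
    simp [hg₁a, hBWdef, LinearMap.mk₂_apply, map_zero, LinearMap.zero_apply,
      add_zero, zero_add]
  · -- injectivity of g₂
    intro x y hxy
    rw [hg₂a, hg₂a, Prod.mk.injEq, Prod.mk.injEq, Prod.mk.injEq] at hxy
    obtain ⟨h1, h2, h3, -⟩ := hxy
    rw [← hsum2 x, ← hsum2 y, haV₁ h1, h2, h3]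
  · -- g₂ preserves the form
    intro x y
    simp only [hg₂a, hBWdef, LinearMap.mk₂_apply, hpa1u, hpb1u, map_zero,
      LinearMap.zero_apply, add_zero, zero_add, haV₁b]
    conv_rhs => rw [← hsum2 x, ← hsum2 y]
    simp only [map_add, LinearMap.add_apply]
    linear_combination (haV₂b (p2a x) (p2a y)).symm
  · -- injectivity of g₃
    intro x y hxy
    rw [hg₃a, hg₃a, Prod.mk.injEq, Prod.mk.injEq, Prod.mk.injEq] at hxy
    obtain ⟨h1, h2, -, h3⟩ := hxy
    rw [← hsum3 x, ← hsum3 y, hbV₁ h1, h2, h3]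
  · -- g₃ preserves the form
    intro x y
    simp only [hg₃a, hBWdef, LinearMap.mk₂_apply, hpa1b, hpb1b, hqBb, hbV₁b, map_zero,
      LinearMap.zero_apply, add_zero, zero_add]
    conv_rhs => rw [← hsum3 x, ← hsum3 y]
    simp only [map_add, LinearMap.add_apply]
    linear_combination (hbV₃b (p3b x) (p3b y)).symm + key23 (p3b x) (p3c y) +
      key23' (p3c x) (p3b y) + ecc (p3c x) (p3c y)
  · -- cube commutes over A
    apply LinearMap.ext
    intro a
    simp only [LinearMap.comp_apply, hg₁a, hg₂a, hp2au, hp2cu, hp2'u]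
  · -- cube commutes over B
    apply LinearMap.ext
    intro b
    simp only [LinearMap.comp_apply, hg₁a, hg₃a, hp3bu, hp3cu, hp3'u]
  · -- cube commutes over C
    apply LinearMap.ext
    intro c
    simp only [LinearMap.comp_apply, hg₂a, hg₃a, hp2ac, hp2cc, hp2'c, hp3bc, hp3cc,
      hp3'c, hc₁]
  · -- A ⫝_D V₃
    apply le_antisymm
    · rintro x ⟨⟨a, ha⟩, ⟨v, hv⟩⟩
      simp only [LinearMap.comp_apply] at ha
      have hx : g₁ (aV₁ a) = g₃ v := by rw [ha, hv]
      rw [hg₁a, hg₃a, Prod.mk.injEq, Prod.mk.injEq, Prod.mk.injEq] at hx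
      obtain ⟨h1, -, -, -⟩ := hx
      have hmem : aV₁ a ∈ LinearMap.range aV₁ ⊓ LinearMap.range bV₁ :=
        ⟨LinearMap.mem_range_self aV₁ a, ⟨p3b v, h1.symm⟩⟩
      rw [hAB] at hmem
      obtain ⟨d, hd⟩ := hmem
      simp only [LinearMap.comp_apply] at hd
      refine ⟨d, ?_⟩
      simp only [LinearMap.comp_apply]
      rw [hd, ha]
    · rintro x ⟨d, hd⟩
      simp only [LinearMap.comp_apply] at hd
      refine Submodule.mem_inf.mpr ⟨⟨dA d, ?_⟩, ⟨bV₃ (dB d), ?_⟩⟩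
      · simpa using hd
      · have h : g₃ (bV₃ (dB d)) = g₁ (aV₁ (dA d)) := by
          rw [hg₃a, hg₁a, hp3bu, hp3cu, hp3'u, hc₁]
        rw [h]; exact hd
  · -- B ⫝_D V₂
    apply le_antisymm
    · rintro x ⟨⟨b, hb⟩, ⟨v, hv⟩⟩
      simp only [LinearMap.comp_apply] at hb
      have hgb : g₃ (bV₃ b) = (bV₁ b, 0, 0, 0) := by rw [hg₃a, hp3bu, hp3cu, hp3'u]
      have hx : ((bV₁ b : V₁), (0 : C), (0 : V₂), (0 : V₃)) = g₂ v := by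
        rw [← hgb, hb, hv]
      rw [hg₂a, Prod.mk.injEq, Prod.mk.injEq, Prod.mk.injEq] at hx
      obtain ⟨h1, -, -, -⟩ := hx
      have hmem : bV₁ b ∈ LinearMap.range aV₁ ⊓ LinearMap.range bV₁ :=
        ⟨⟨p2a v, h1.symm⟩, LinearMap.mem_range_self bV₁ b⟩
      rw [hAB] at hmem
      obtain ⟨d, hd⟩ := hmem
      simp only [LinearMap.comp_apply] at hd
      refine ⟨d, ?_⟩
      simp only [LinearMap.comp_apply]
      rw [← hb, hgb, hg₁a, hd]
    · rintro x ⟨d, hd⟩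
      simp only [LinearMap.comp_apply] at hd
      refine Submodule.mem_inf.mpr ⟨⟨dB d, ?_⟩, ⟨aV₂ (dA d), ?_⟩⟩
      · simp only [LinearMap.comp_apply]
        rw [hg₃a, hp3bu, hp3cu, hp3'u, ← hc₁, ← hd, hg₁a]
      · rw [hg₂a, hp2au, hp2cu, hp2'u, ← hd, hg₁a]
  · -- C ⫝_D V₁
    apply le_antisymm
    · rintro x ⟨⟨c, hc⟩, ⟨v, hv⟩⟩
      simp only [LinearMap.comp_apply] at hc
      have hgc : g₂ (cV₂ c) = (aV₁ (dA (ρC c)), ρC' c, 0, 0) := by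
        rw [hg₂a, hp2ac, hp2cc, hp2'c]
      have hx : ((aV₁ (dA (ρC c)) : V₁), ρC' c, (0 : V₂), (0 : V₃)) = g₁ v := by
        rw [← hgc, hc, hv]
      rw [hg₁a, Prod.mk.injEq, Prod.mk.injEq, Prod.mk.injEq] at hx
      obtain ⟨-, h2, -, -⟩ := hx
      refine ⟨ρC c, ?_⟩
      simp only [LinearMap.comp_apply]
      rw [hg₁a, ← hc, hgc, h2]
    · rintro x ⟨d, hd⟩
      simp only [LinearMap.comp_apply] at hd
      refine Submodule.mem_inf.mpr ⟨⟨dC d, ?_⟩, ⟨aV₁ (dA d), ?_⟩⟩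
      · simp only [LinearMap.comp_apply]
        have h : g₂ (cV₂ (dC d)) = (aV₁ (dA (ρC (dC d))), ρC' (dC d), 0, 0) := by
          rw [hg₂a, hp2ac, hp2cc, hp2'c]
        rw [h, hρC, hρC'dC, ← hd, hg₁a]
      · rw [← hd]
  · -- symmetric
    intro hs₁ hs₂ hs₃ x y
    simp only [hBWdef, LinearMap.mk₂_apply]
    linear_combination hs₁ x.1 y.1 + hs₂ (aV₂ (pa1 x.1)) (cV₂ y.2.1) +
      hs₃ (bV₃ (pb1 x.1)) (cV₃ y.2.1) + hs₂ (aV₂ (pa1 x.1)) y.2.2.1 +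
      hs₃ (bV₃ (qB x.1)) y.2.2.2 + hs₂ (cV₂ x.2.1) (aV₂ (pa1 y.1)) +
      hs₃ (cV₃ x.2.1) (bV₃ (pb1 y.1)) + hs₂ (cV₂ x.2.1) (cV₂ y.2.1) +
      hs₂ (cV₂ x.2.1) y.2.2.1 + hs₃ (cV₃ x.2.1) y.2.2.2 +
      hs₂ x.2.2.1 (aV₂ (pa1 y.1)) + hs₂ x.2.2.1 (cV₂ y.2.1) +
      hs₂ x.2.2.1 y.2.2.1 + hs₃ x.2.2.2 (bV₃ (qB y.1)) +
      hs₃ x.2.2.2 (cV₃ y.2.1) + hs₃ x.2.2.2 y.2.2.2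
  · -- alternating
    intro ha₁ ha₂ ha₃ x
    have hp₂ := bilamalg_alt_pair B₂ ha₂
    have hp₃ := bilamalg_alt_pair B₃ ha₃
    simp only [hBWdef, LinearMap.mk₂_apply]
    linear_combination ha₁ x.1 + hp₂ (aV₂ (pa1 x.1)) (cV₂ x.2.1) +
      hp₃ (bV₃ (pb1 x.1)) (cV₃ x.2.1) + hp₂ (aV₂ (pa1 x.1)) x.2.2.1 +
      hp₃ (bV₃ (qB x.1)) x.2.2.2 + ha₂ (cV₂ x.2.1) + hp₂ (cV₂ x.2.1) x.2.2.1 +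
      hp₃ (cV₃ x.2.1) x.2.2.2 + ha₂ x.2.2.1 + ha₃ x.2.2.2
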